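/- Let F be the free group on generators a₁,…,aₙ and let P be the (noncommutative) power series ring ℤ⟨⟨x₁,…,xₙ⟩⟩ modulo the relations xⱼ² = 0. The map sending aⱼ to 1 + xⱼ extends to an injective group homomorphism from F into the group of units of P. -/

import Mathlib

/-- The relation identifying the squares of the generators with `0`. -/
def MagnusRel (n : ℕ) : FreeAlgebra ℤ (Fin n) → FreeAlgebra ℤ (Fin n) → Prop :=
  fun a b => ∃ j : Fin n, a = FreeAlgebra.ι ℤ j * FreeAlgebra.ι ℤ j ∧ b = 0

/-- The ring `P = ℤ⟨x₁,…,xₙ⟩ / (x₁², …, xₙ²)`.  (Since `xⱼ² = 0`, the Magnus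
representation `aⱼ ↦ 1 + xⱼ` takes values in this quotient; it is the image of the
corresponding power series ring `ℤ⟨⟨x₁,…,xₙ⟩⟩/(xⱼ²)` relevant to the statements below.) -/
abbrev MagnusRing (n : ℕ) := RingQuot (MagnusRel n)

/-- The indeterminate `xⱼ` in `MagnusRing n`. -/
noncomputable def magnusX {n : ℕ} (j : Fin n) : MagnusRing n :=
  RingQuot.mkRingHom (MagnusRel n) (FreeAlgebra.ι ℤ j)

/-- The augmentation `ρ : P → ℤ` sending each `xⱼ` to `0`. -/
noncomputable def magnusAug (n : ℕ) : MagnusRing n →+* ℤ :=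
  RingQuot.lift ⟨((FreeAlgebra.lift ℤ (fun _ : Fin n => (0 : ℤ))) : _).toRingHom, by
    rintro a b ⟨j, rfl, rfl⟩
    simp⟩

/-- The fundamental ideal `Δ = ker ρ`, viewed as a `ℤ`-submodule of `P` (so that its
powers `Δᵏ` are the usual powers of the two-sided ideal `Δ`). -/
noncomputable def magnusDelta (n : ℕ) : Submodule ℤ (MagnusRing n) :=
  (RingHom.ker (magnusAug n)).restrictScalars ℤ

noncomputable section MagnusAux

variable {n : ℕ}

/-- The module on which `MagnusRing n` acts faithfully enough: free `ℤ`-module on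
all lists of generators. -/
abbrev MM (n : ℕ) := List (Fin n) →₀ ℤ

/-- operator: prepend `j` unless the head is already `j` (then kill). -/
def AOp (j : Fin n) : Module.End ℤ (MM n) :=
  Finsupp.lift (MM n) ℤ (List (Fin n))
    (fun l => if l.head? = some j then 0 else Finsupp.single (j :: l) 1)

lemma AOp_single (j : Fin n) (l : List (Fin n)) :
    AOp j (Finsupp.single l 1) =
      if l.head? = some j then 0 else Finsupp.single (j :: l) 1 := by
  simp [AOp]

lemma AOp_sq (j : Fin n) : AOp j * AOp j = 0 := by
  apply (Finsupp.lhom_ext (fun l c => ?_))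
  have : (Finsupp.single l c : MM n) = c • Finsupp.single l 1 := by
    simp [Finsupp.smul_single]
  rw [this, map_smul, map_smul]
  rcases eq_or_ne l.head? (some j) with h | h
  · simp [Module.End.mul_apply, AOp_single, h]
  · simp [Module.End.mul_apply, AOp_single, h]

lemma AOp_support (j : Fin n) (f : MM n) :
    (AOp j f).support ⊆ f.support.image (j :: ·) := by
  classical
  rw [AOp, Finsupp.lift_apply]
  refine Finset.Subset.trans Finsupp.support_sum ?_
  intro l hl
  simp only [Finset.mem_biUnion] at hl
  obtain ⟨a, ha, hl⟩ := hl
  have := Finsupp.support_smul (b := f a)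
    (g := if a.head? = some j then 0 else Finsupp.single (j :: a) 1) hl
  rcases eq_or_ne a.head? (some j) with h | h
  · simp [h] at this
  · simp only [h, if_neg, if_false] at this
    have := Finsupp.support_single_subset this
    simp only [Finset.mem_singleton] at this
    subst this
    exact Finset.mem_image_of_mem _ ha

lemma AOp_apply_cons (j : Fin n) (f : MM n) (l : List (Fin n)) :
    (AOp j f) (j :: l) = if l.head? = some j then 0 else f l := by
  classical
  rw [AOp, Finsupp.lift_apply, Finsupp.sum_apply]
  have step := Finsupp.sum_congr (f := f)
    (g1 := fun m c => ((c • if m.head? = some j then 0 else Finsupp.single (j :: m) 1 : MM n)) (j :: l))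
    (g2 := fun m c => if m = l then (if l.head? = some j then 0 else c) else 0)
    (fun m _hm => ?_)
  · rw [step, Finsupp.sum_ite_eq']
    rcases eq_or_ne l.head? (some j) with h | h
    · simp [h]
    · simp only [h, if_neg, if_false]
      split_ifs with hl
      · rfl
      · simp only [Finsupp.mem_support_iff, not_not] at hl
        exact hl.symm
  · rcases eq_or_ne m l with rfl | hne
    · rcases eq_or_ne m.head? (some j) with h | h <;> simp [h]
    · rcases eq_or_ne m.head? (some j) with h | h
      · simp [h, hne]
      · simp [h, hne, Finsupp.single_apply, List.cons_eq_cons, Ne.symm hne]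

/-- `x_j² = 0` in `MagnusRing n`. -/
lemma magnusX_sq (j : Fin n) : magnusX j * magnusX j = 0 := by
  rw [magnusX, ← map_mul]
  have h := RingQuot.mkRingHom_rel (r := MagnusRel n) ⟨j, rfl, rfl⟩
  simpa using h

/-- The representation of `MagnusRing n` on `MM n`. -/
def magnusRep (n : ℕ) : MagnusRing n →+* Module.End ℤ (MM n) :=
  RingQuot.lift ⟨(FreeAlgebra.lift ℤ (AOp (n := n))).toRingHom, by
    rintro a b ⟨j, rfl, rfl⟩
    simp [FreeAlgebra.lift_ι_apply, AOp_sq]⟩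

lemma magnusRep_X (j : Fin n) : magnusRep n (magnusX j) = AOp j := by
  rw [magnusX, magnusRep, RingQuot.lift_mkRingHom_apply]
  simp [FreeAlgebra.lift_ι_apply]

/-- The operator `1 + k • A_i`. -/
def opG (p : Fin n × ℤ) : Module.End ℤ (MM n) := 1 + p.2 • AOp p.1

lemma opG_mul_same (i : Fin n) (k m : ℤ) :
    opG (i, k) * opG (i, m) = opG (i, k + m) := by
  simp only [opG, add_mul, mul_add, one_mul, mul_one, smul_mul_assoc, mul_smul_comm,
    AOp_sq, smul_zero, add_zero, add_smul]
  abel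

def sgn (b : Bool) : ℤ := cond b 1 (-1)

def opOf (x : Fin n × Bool) : Module.End ℤ (MM n) := opG (x.1, sgn x.2)

/-- Group consecutive equal generators of a word into powers. -/
def groupW : List (Fin n × Bool) → List (Fin n × ℤ)
  | [] => []
  | (j, b) :: L =>
    match groupW L with
    | [] => [(j, sgn b)]
    | (i, k) :: G => if j = i then (i, k + sgn b) :: G else (j, sgn b) :: (i, k) :: G

/-- Relation of heads between a word and its grouped version. -/
def headOK : List (Fin n × Bool) → List (Fin n × ℤ) → Prop
  | [], [] => True
  | (j, b) :: _, (i, k) :: _ => j = i ∧ (if b then 0 < k else k < 0)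
  | _, _ => False

/-- Reducedness as a chain condition. -/
def RR : (Fin n × Bool) → (Fin n × Bool) → Prop := fun a b => a.1 = b.1 → a.2 = b.2

lemma groupW_spec : ∀ L : List (Fin n × Bool), List.Chain' RR L →
    headOK L (groupW L) ∧
    List.Chain' (fun p q => p.1 ≠ q.1) (groupW L) ∧
    (∀ p ∈ groupW L, p.2 ≠ 0) ∧
    (L.map opOf).prod = ((groupW L).map opG).prod := by
  intro L
  induction L with
  | nil => intro _; exact ⟨trivial, by simp [groupW]; exact List.isChain_nil, by simp [groupW], by simp [groupW]⟩
  | cons x L ih =>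
    obtain ⟨j, b⟩ := x
    intro hchain
    have hL : List.Chain' RR L := hchain.tail
    obtain ⟨hhead, hne, hnz, hprod⟩ := ih hL
    show headOK ((j,b) :: L) (groupW ((j,b) :: L)) ∧ _
    rcases hG : groupW L with _ | ⟨⟨i, k⟩, G⟩
    · -- groupW L = [], hence L = []
      have hLnil : L = [] := by
        cases L with
        | nil => rfl
        | cons y L' => rw [hG] at hhead; obtain ⟨y1, y2⟩ := y; exact absurd hhead (by simp [headOK])
      subst hLnil
      refine ⟨?_, ?_, ?_, ?_⟩
      · show headOK _ ((j, sgn b) :: [])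
        refine ⟨rfl, ?_⟩
        cases b <;> simp [sgn]
      · show List.Chain' _ [(j, sgn b)]
        exact List.isChain_singleton _
      · show ∀ p ∈ [(j, sgn b)], p.2 ≠ 0
        intro p hp
        simp only [List.mem_singleton] at hp
        subst hp
        cases b <;> simp [sgn]
      · show (List.map opOf [(j,b)]).prod = (List.map opG [(j, sgn b)]).prod
        simp [opOf]
    · -- groupW L = (i,k) :: G
      obtain ⟨y, L', rfl⟩ : ∃ y L', L = y :: L' := by
        cases L with
        | nil => simp [groupW] at hG
        | cons y L' => exact ⟨y, L', rfl⟩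
      obtain ⟨i', b'⟩ := y
      rw [hG] at hhead hne hnz hprod
      obtain ⟨rfl, hsign⟩ : i' = i ∧ (if b' then 0 < k else k < 0) := hhead
      have hgW : groupW ((j,b) :: (i',b') :: L') =
          if j = i' then (i', k + sgn b) :: G else (j, sgn b) :: (i', k) :: G := by
        show (match groupW ((i',b') :: L') with
          | [] => [(j, sgn b)]
          | (i', k') :: G' => if j = i' then (i', k' + sgn b) :: G'
              else (j, sgn b) :: (i', k') :: G') = _
        rw [hG]
      by_cases hji : j = i'
      · subst hji
        have hbb : b = b' := hchain.rel_head rfl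
        subst hbb
        have hknz : k + sgn b ≠ 0 ∧ (if b then 0 < k + sgn b else k + sgn b < 0) := by
          cases b <;> simp [sgn] at hsign ⊢ <;> omega
        rw [hgW, if_pos rfl]
        refine ⟨⟨rfl, hknz.2⟩, ?_, ?_, ?_⟩
        · simp only [List.Chain', List.isChain_cons] at hne ⊢
          exact hne
        · intro p hp
          rcases List.mem_cons.mp hp with rfl | hp
          · exact hknz.1
          · exact hnz p (List.mem_cons_of_mem _ hp)
        · simp only [List.map_cons, List.prod_cons] at hprod ⊢
          rw [hprod]
          show opOf (j, b) * (opG (j,k) * _) = opG (j, k + sgn b) * _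
          rw [← mul_assoc, opOf, opG_mul_same, add_comm (sgn b) k]
      · rw [hgW, if_neg hji]
        refine ⟨⟨rfl, by cases b <;> simp [sgn]⟩, ?_, ?_, ?_⟩
        · exact List.IsChain.cons_cons hji hne
        · intro p hp
          rcases List.mem_cons.mp hp with rfl | hp
          · cases b <;> simp [sgn]
          · exact hnz p hp
        · simp only [List.map_cons, List.prod_cons] at hprod ⊢
          rw [hprod, opOf]

end MagnusAux

noncomputable section MagnusMain

variable {n : ℕ}

lemma key (G : List (Fin n × ℤ)) (hne : List.Chain' (fun p q => p.1 ≠ q.1) G) :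
    (∀ l ∈ (((G.map opG).prod) (Finsupp.single ([] : List (Fin n)) 1)).support,
      l.length ≤ G.length) ∧
    (((G.map opG).prod) (Finsupp.single ([] : List (Fin n)) 1)) (G.map Prod.fst)
      = (G.map Prod.snd).prod := by
  induction G with
  | nil =>
    constructor
    · intro l hl
      have := Finsupp.support_single_subset hl
      simp only [Finset.mem_singleton] at this
      simp [this]
    · simp
  | cons p G ih =>
    obtain ⟨i, k⟩ := p
    obtain ⟨hlen, hcoef⟩ := ih hne.tail
    set F := ((G.map opG).prod) (Finsupp.single ([] : List (Fin n)) 1) with hF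
    have expand : ((List.map opG ((i,k) :: G)).prod) (Finsupp.single ([] : List (Fin n)) 1)
        = F + k • (AOp i F) := by
      simp only [List.map_cons, List.prod_cons, Module.End.mul_apply, ← hF, opG,
        LinearMap.add_apply, Module.End.one_apply, LinearMap.smul_apply]
    constructor
    · intro l hl
      rw [expand] at hl
      rcases Finset.mem_union.mp (Finsupp.support_add hl) with h | h
      · exact le_trans (hlen l h) (by simp)
      · have h2 := Finsupp.support_smul h
        have h3 := AOp_support i F h2
        simp only [Finset.mem_image] at h3
        obtain ⟨m, hm, rfl⟩ := h3
        simpa using Nat.succ_le_succ (hlen m hm)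
    · rw [expand]
      set w := G.map Prod.fst with hw
      have hF0 : F (i :: w) = 0 := by
        by_contra h0
        have := hlen (i :: w) (Finsupp.mem_support_iff.mpr h0)
        simp [hw] at this
      have hwhead : w.head? ≠ some i := by
        cases G with
        | nil => simp [hw]
        | cons q G' =>
          have : i ≠ q.1 := (List.isChain_cons_cons.mp hne).1
          simp only [hw, List.map_cons, List.head?_cons, ne_eq, Option.some.injEq]
          exact fun e => this e.symm
      have hAF : (AOp i F) (i :: w) = F w := by
        rw [AOp_apply_cons, if_neg hwhead]
      have hmap : ((i,k) :: G).map Prod.fst = i :: w := by simp [hw]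
      rw [hmap]
      simp only [Finsupp.add_apply, Finsupp.smul_apply]
      rw [hF0, hAF, hcoef]
      simp [smul_eq_mul]

/-- no cancelling pair implies the chain condition `RR`. -/
lemma noRed_chain' : ∀ (M : List (Fin n × Bool)),
    (∀ (L1 : List (Fin n × Bool)) (x : Fin n) (b : Bool) L2,
      M ≠ L1 ++ (x, b) :: (x, !b) :: L2) → List.Chain' RR M := by
  intro M
  induction M with
  | nil => intro _; exact List.isChain_nil
  | cons a M ih =>
    intro h
    cases M with
    | nil => exact List.isChain_singleton _
    | cons c M' =>
      refine List.isChain_cons_cons.mpr ⟨?_, ih ?_⟩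
      · intro hfst
        by_contra hsnd
        obtain ⟨c1, c2⟩ := c
        obtain ⟨a1, a2⟩ := a
        have hfst' : a1 = c1 := hfst
        subst hfst'
        have hc : c2 = !a2 := by cases a2 <;> cases c2 <;> simp_all [RR]
        subst hc
        exact h [] a1 a2 M' rfl
      · intro L1 x b L2 hM
        exact h (a :: L1) x b L2 (by simp [hM])

lemma reduced_toWord (w : FreeGroup (Fin n)) : List.Chain' RR w.toWord := by
  apply noRed_chain'
  intro L1 x b L2 h
  have hr : w.toWord = FreeGroup.reduce w.toWord := by
    conv_lhs => rw [← FreeGroup.mk_toWord (x := w)]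
    rw [FreeGroup.toWord_mk]
  exact FreeGroup.reduce.not (hr ▸ h)

/-- The Magnus unit `1 + xⱼ`. -/
def magnusU (j : Fin n) : (MagnusRing n)ˣ where
  val := 1 + magnusX j
  inv := 1 - magnusX j
  val_inv := by
    have e : (1 + magnusX j) * (1 - magnusX j) = 1 - magnusX j * magnusX j := by
      noncomm_ring
      rw [mul_smul_comm]
    rw [e, magnusX_sq, sub_zero]
  inv_val := by
    have e : (1 - magnusX j) * (1 + magnusX j) = 1 - magnusX j * magnusX j := by
      noncomm_ring
      rw [smul_mul_assoc]
    rw [e, magnusX_sq, sub_zero]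

lemma magnusRep_opOf (x : Fin n × Bool) :
    magnusRep n (((cond x.2 (magnusU x.1) (magnusU x.1)⁻¹ : (MagnusRing n)ˣ) : MagnusRing n))
      = opOf x := by
  obtain ⟨j, b⟩ := x
  cases b
  · show magnusRep n (((magnusU j)⁻¹ : (MagnusRing n)ˣ) : MagnusRing n) = _
    have h : (((magnusU j)⁻¹ : (MagnusRing n)ˣ) : MagnusRing n) = 1 - magnusX j := rfl
    rw [h, map_sub, map_one, magnusRep_X]
    show _ = opG (j, sgn false)
    simp [opG, sgn, sub_eq_add_neg]
  · show magnusRep n ((magnusU j : (MagnusRing n)ˣ) : MagnusRing n) = _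
    have h : ((magnusU j : (MagnusRing n)ˣ) : MagnusRing n) = 1 + magnusX j := rfl
    rw [h, map_add, map_one, magnusRep_X]
    show _ = opG (j, sgn true)
    simp [opG, sgn]

end MagnusMain

/-- **Magnus representation.** The map sending the free generator `aⱼ` to `1 + xⱼ`
extends to an injective group homomorphism from the free group on `n` generators into
the group of units of `P`. -/
theorem magnus_representation_faithful (n : ℕ) :
    ∃ β : FreeGroup (Fin n) →* (MagnusRing n)ˣ,
      Function.Injective β ∧
        ∀ j : Fin n,
          ((β (FreeGroup.of j) : (MagnusRing n)ˣ) : MagnusRing n) = 1 + magnusX j := by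
  classical
  refine ⟨FreeGroup.lift magnusU, ?_, ?_⟩
  · set β := FreeGroup.lift magnusU with hβ
    rw [injective_iff_map_eq_one]
    intro w hw
    by_contra hw1
    set L := w.toWord with hLdef
    have hL : L ≠ [] := fun h => hw1 (FreeGroup.toWord_eq_nil_iff.mp h)
    have hred := reduced_toWord w
    obtain ⟨hhead, hne, hnz, hprod⟩ := groupW_spec L hred
    have h1 : magnusRep n ((β w : (MagnusRing n)ˣ) : MagnusRing n) = (L.map opOf).prod := by
      conv_lhs => rw [← FreeGroup.mk_toWord (x := w)]
      rw [hβ, FreeGroup.lift_mk]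
      have hcoe : ((List.map (fun x => cond x.2 (magnusU x.1) (magnusU x.1)⁻¹) w.toWord).prod :
            (MagnusRing n)ˣ).val
          = (List.map ((Units.coeHom (MagnusRing n)) ∘
              (fun x => cond x.2 (magnusU x.1) (magnusU x.1)⁻¹)) w.toWord).prod := by
        rw [← List.map_map]
        rw [← map_list_prod (Units.coeHom (MagnusRing n))]
        rfl
      rw [hcoe, map_list_prod (magnusRep n), List.map_map]
      congr 1
      exact List.map_congr_left (fun x _ => magnusRep_opOf x)
    rw [hw, Units.val_one, map_one] at h1
    have h2 : ((groupW L).map opG).prod = 1 := by rw [← hprod, ← h1]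
    have hGne : groupW L ≠ [] := by
      intro hnil
      obtain ⟨y, L', hLc⟩ := List.exists_cons_of_ne_nil hL
      rw [hnil, hLc] at hhead
      obtain ⟨y1, y2⟩ := y
      exact hhead
    obtain ⟨hlen, hcoef⟩ := key (groupW L) hne
    rw [h2] at hcoef
    have hww : (groupW L).map Prod.fst ≠ [] := by
      intro hc
      exact hGne (List.map_eq_nil_iff.mp hc)
    have hzero : (Finsupp.single ([] : List (Fin n)) 1 : MM n) ((groupW L).map Prod.fst) = 0 := by
      rw [Finsupp.single_apply, if_neg]
      intro h
      exact hww h.symm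
    rw [Module.End.one_apply, hzero] at hcoef
    have hprodnz : ((groupW L).map Prod.snd).prod ≠ 0 := by
      apply List.prod_ne_zero
      intro hx
      simp only [List.mem_map] at hx
      obtain ⟨p, hp, hpx⟩ := hx
      exact hnz p hp hpx
    exact hprodnz hcoef.symm
  · intro j
    rw [FreeGroup.lift_apply_of]
    rfl
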